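/- Many-to-one formula: Assume condition A2. Then for every s ∈ I_μ⁺ ∪ I_μ⁻, every x ∈ ℙ(V), every n ≥ 1 and every bounded measurable function h : (ℙ(V) × ℝ)^n → ℝ, one has 𝔼[ Σ_{|u|=n} h(X^x_{u|1}, S^x_{u|1}, …, X^x_u, S^x_u) ] = r_s(x) 𝔪(s)^n 𝔼_{Q_s^x}[ r_s(X_n)^{-1} e^{−s S_n} h(X_1, S_1, …, X_n, S_n) ], where X^x_u = G_u·x and S^x_u = σ(G_u, x). -/

import Mathlib

/-!
Formalization framework for "The extremal position of a branching random walk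
in the general linear group" (Grama, Mentemeier, Xiao).

`V = ℝ^d` (Euclidean), `𝔾 = GL(V)` is modelled by the units of the continuous
linear endomorphisms of `V`, and `ℙ(V)` by the projectivization of `V`.
-/

open MeasureTheory Filter Topology ProbabilityTheory Set
open scoped ENNReal NNReal Classical

noncomputable section

namespace BRWGL

abbrev V (d : ℕ) : Type := EuclideanSpace ℝ (Fin d)
abbrev GLV (d : ℕ) : Type := (V d →L[ℝ] V d)ˣ
abbrev PV (d : ℕ) : Type := Projectivization ℝ (V d)

variable {d : ℕ}

instance : TopologicalSpace (PV d) :=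
  inferInstanceAs (TopologicalSpace (Quotient (projectivizationSetoid ℝ (V d))))
instance : MeasurableSpace (PV d) := borel _
instance : BorelSpace (PV d) := ⟨rfl⟩
instance : MeasurableSpace (GLV d) := borel _
instance : BorelSpace (GLV d) := ⟨rfl⟩

/-- operator norm `‖g‖`. -/
def nrm (g : GLV d) : ℝ := ‖(g : V d →L[ℝ] V d)‖

/-- operator norm `‖g⁻¹‖`. -/
def nrmInv (g : GLV d) : ℝ := ‖((g⁻¹ : GLV d) : V d →L[ℝ] V d)‖

/-- determinant `det g`. -/
def detv (g : GLV d) : ℝ := ContinuousLinearMap.det (g : V d →L[ℝ] V d)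

/-- determinant `det (g⁻¹)`. -/
def detInv (g : GLV d) : ℝ := detv (g⁻¹)

lemma unit_injective (g : GLV d) :
    Function.Injective fun v : V d => (g : V d →L[ℝ] V d) v := by
  intro a b hab
  have h : ∀ v : V d, ((g⁻¹ : GLV d) : V d →L[ℝ] V d) ((g : V d →L[ℝ] V d) v) = v := by
    intro v
    have h1 : (((g⁻¹ : GLV d) : V d →L[ℝ] V d) * ((g : GLV d) : V d →L[ℝ] V d)) v = v := by
      have : ((g⁻¹ : GLV d) : V d →L[ℝ] V d) * ((g : GLV d) : V d →L[ℝ] V d) = 1 := by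
        rw [← Units.val_mul, inv_mul_cancel, Units.val_one]
      rw [this, ContinuousLinearMap.one_apply]
    rw [ContinuousLinearMap.mul_apply] at h1
    exact h1
  have h2 := congrArg (fun w => ((g⁻¹ : GLV d) : V d →L[ℝ] V d) w) hab
  simpa [h] using h2

/-- the projective action `g · x` of `𝔾` on `ℙ(V)`. -/
def gact (g : GLV d) (x : PV d) : PV d :=
  Projectivization.map ((g : V d →L[ℝ] V d) : V d →ₗ[ℝ] V d)
    (by simpa using unit_injective g) x

/-- the norm cocycle `σ(g, x) = log (‖g v‖ / ‖v‖)` for `x = ℝ v`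
(this does not depend on the chosen representative `v` of `x`). -/
def cocycle (g : GLV d) (x : PV d) : ℝ :=
  Real.log (‖(g : V d →L[ℝ] V d) x.rep‖ / ‖x.rep‖)

/-- the spectral radius `ρ(g)`, via the Gelfand formula `ρ(g) = inf_n ‖gⁿ‖^{1/n}`. -/
def specRad (g : GLV d) : ℝ :=
  ⨅ n : ℕ, ‖((g : V d →L[ℝ] V d)) ^ (n + 1)‖ ^ ((1 : ℝ) / (n + 1))

/-! ## Branching random walk on `GL(V)` -/

/-- A branching random walk on `GL(V)`, encoded in Ulam–Harris fashion: each node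
`u : List ℕ` of the infinite tree carries an offspring number `Noff u`, each potential
child `u ++ [i]` carries a mark `mark (u ++ [i])` in `GL(V)`, and the data
(offspring number, marks of the children) attached to the different nodes are i.i.d.
(this encodes reproduction according to i.i.d. copies of a point process `𝒩` on `𝔾`). -/
structure BRW (d : ℕ) (Ω : Type*) [MeasurableSpace Ω] where
  PP : Measure Ω
  prob : IsProbabilityMeasure PP
  Noff : List ℕ → Ω → ℕ
  mark : List ℕ → Ω → GLV d
  measN : ∀ u, Measurable (Noff u)
  measMark : ∀ u, Measurable (mark u)
  indep : iIndepFun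
    (fun u : List ℕ => fun ω => (Noff u ω, fun i : ℕ => mark (u ++ [i]) ω)) PP
  ident : ∀ u v : List ℕ,
    IdentDistrib (fun ω => (Noff u ω, fun i : ℕ => mark (u ++ [i]) ω))
      (fun ω => (Noff v ω, fun i : ℕ => mark (v ++ [i]) ω)) PP PP

namespace BRW

variable {Ω : Type*} [MeasurableSpace Ω] (b : BRW d Ω)

/-- a node `u` of the Ulam–Harris tree belongs to the Galton–Watson tree `𝕋` at time `ω`. -/
def alive (u : List ℕ) (ω : Ω) : Prop :=
  ∀ k : Fin u.length, u.get k < b.Noff (u.take k) ω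

/-- the branching random walk `G_u = g_u g_{u|n-1} ⋯ g_{u|1}`. -/
def Gu (u : List ℕ) (ω : Ω) : GLV d :=
  (((List.range u.length).map fun k => b.mark (u.take (k + 1)) ω).reverse).prod

/-- the event `𝒮` of ultimate survival of the system. -/
def survival : Set Ω := {ω | ∀ n : ℕ, ∃ u : List ℕ, u.length = n ∧ b.alive u ω}

/-- `𝔼 N`, the expected number of first-generation particles. -/
def EN : ℝ := ∫ ω, (b.Noff [] ω : ℝ) ∂b.PP

/-- Condition A1: `1 < 𝔼 N` and `𝔼 (N^{1+δ}) < ∞` for some `δ > 0`. -/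
structure CondA1 : Prop where
  int : Integrable (fun ω => (b.Noff [] ω : ℝ)) b.PP
  mean_gt : 1 < b.EN
  mom : ∃ δ > (0 : ℝ), Integrable (fun ω => (b.Noff [] ω : ℝ) ^ ((1 : ℝ) + δ)) b.PP

/-- `μ(B) = (𝔼N)⁻¹ 𝔼[Σ_{|u|=1} 1_B(G_u)]`:  `μ` is the normalized intensity measure of
the first-generation point process. -/
def IsBRWLaw (μ : Measure (GLV d)) : Prop :=
  ∀ B : Set (GLV d), MeasurableSet B →
    μ B * ENNReal.ofReal b.EN =
      ∫⁻ ω, ∑ i ∈ Finset.range (b.Noff [] ω),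
        B.indicator (fun _ => (1 : ℝ≥0∞)) (b.mark [i] ω) ∂b.PP

/-- the directed maximal position
`M_n^x(A) = sup {σ(G_u, x) : |u| = n, G_u · x ∈ A}`, an `EReal` (`sup ∅ = -∞`). -/
def MnA (x : PV d) (A : Set (PV d)) (n : ℕ) (ω : Ω) : EReal :=
  sSup ((fun u : List ℕ => (cocycle (b.Gu u ω) x : EReal)) ''
    {u | u.length = n ∧ b.alive u ω ∧ gact (b.Gu u ω) x ∈ A})

/-- the directed minimal position
`m_n^x(A) = inf {σ(G_u, x) : |u| = n, G_u · x ∈ A}`, an `EReal` (`inf ∅ = +∞`). -/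
def mnA (x : PV d) (A : Set (PV d)) (n : ℕ) (ω : Ω) : EReal :=
  sInf ((fun u : List ℕ => (cocycle (b.Gu u ω) x : EReal)) ''
    {u | u.length = n ∧ b.alive u ω ∧ gact (b.Gu u ω) x ∈ A})

/-- the directed maximal position of `log F(G_u)` for a functional `F` on `𝔾`. -/
def MnF (F : GLV d → ℝ) (x : PV d) (A : Set (PV d)) (n : ℕ) (ω : Ω) : EReal :=
  sSup ((fun u : List ℕ => (Real.log (F (b.Gu u ω)) : EReal)) ''
    {u | u.length = n ∧ b.alive u ω ∧ gact (b.Gu u ω) x ∈ A})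

/-- the directed minimal position of `log F(G_u)` for a functional `F` on `𝔾`. -/
def mnF (F : GLV d → ℝ) (x : PV d) (A : Set (PV d)) (n : ℕ) (ω : Ω) : EReal :=
  sInf ((fun u : List ℕ => (Real.log (F (b.Gu u ω)) : EReal)) ''
    {u | u.length = n ∧ b.alive u ω ∧ gact (b.Gu u ω) x ∈ A})

/-- `Y_s = Σ_{|u|=1} ‖G_u‖^s`. -/
def Ys (s : ℝ) (ω : Ω) : ℝ :=
  ∑ i ∈ Finset.range (b.Noff [] ω), nrm (b.mark [i] ω) ^ s

end BRW

/-! ## the intervals `I_μ⁺`, `I_μ⁻` and condition A2 -/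

/-- `I_μ⁺ = {s ≥ 0 : ∫ ‖g‖^s (1 + ‖g‖^d |det g⁻¹|) dμ < ∞}`. -/
def Iplus (d : ℕ) (μ : Measure (GLV d)) : Set ℝ :=
  {s | 0 ≤ s ∧ Integrable (fun g => nrm g ^ s * (1 + nrm g ^ d * |detInv g|)) μ}

/-- `I_μ⁻ = {s ≤ 0 : ∫ ‖g⁻¹‖^{-s} (1 + ‖g‖^d |det g⁻¹|) dμ < ∞}`. -/
def Iminus (d : ℕ) (μ : Measure (GLV d)) : Set ℝ :=
  {s | s ≤ 0 ∧ Integrable (fun g => nrmInv g ^ (-s) * (1 + nrm g ^ d * |detInv g|)) μ}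

/-- Condition A2: `μ` has a density with respect to the Haar measure on `𝔾`,
`inf_x μ{g : σ(g,x) > c₀} > 0` for some `c₀ > 0`, and the moment bound
`∫ max(‖g‖,‖g⁻¹‖)^{η₀} (1 + ‖g‖^d |det g⁻¹|) dμ < ∞` holds for some `η₀ > 0`. -/
structure CondA2 (d : ℕ) (μ : Measure (GLV d)) : Prop where
  isProb : IsProbabilityMeasure μ
  density : ∃ η : Measure (GLV d), η.IsHaarMeasure ∧ μ.AbsolutelyContinuous η
  lower : ∃ c₀ > (0 : ℝ), 0 < ⨅ x : PV d, μ {g | c₀ < cocycle g x}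
  moment : ∃ η₀ > (0 : ℝ), Integrable (fun g : GLV d =>
    max (nrm g) (nrmInv g) ^ η₀ * (1 + nrm g ^ d * |detInv g|)) μ

/-- The spectral data of the transfer operators
`P_s φ(x) = ∫ e^{s σ(g,x)} φ(g·x) μ(dg)`: for every `s ∈ I_μ⁺ ∪ I_μ⁻`,
the dominant eigenvalue `κ(s) > 0`, the strictly positive continuous eigenfunction `r_s`
(`P_s r_s = κ(s) r_s`) and the eigenprobability `ν_s` (`ν_s P_s = κ(s) ν_s`);
`ν = ν 0`. -/
structure EigenSystem (d : ℕ) (μ : Measure (GLV d)) where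
  κ : ℝ → ℝ
  r : ℝ → PV d → ℝ
  ν : ℝ → Measure (PV d)
  κ_pos : ∀ s ∈ Iplus d μ ∪ Iminus d μ, 0 < κ s
  r_pos : ∀ s ∈ Iplus d μ ∪ Iminus d μ, ∀ x, 0 < r s x
  r_cont : ∀ s ∈ Iplus d μ ∪ Iminus d μ, Continuous (r s)
  eig : ∀ s ∈ Iplus d μ ∪ Iminus d μ, ∀ x : PV d,
    ∫ g, Real.exp (s * cocycle g x) * r s (gact g x) ∂μ = κ s * r s x
  ν_prob : ∀ s ∈ Iplus d μ ∪ Iminus d μ, IsProbabilityMeasure (ν s)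
  ν_eig : ∀ s ∈ Iplus d μ ∪ Iminus d μ, ∀ φ : PV d → ℝ, Continuous φ →
    ∫ x, (∫ g, Real.exp (s * cocycle g x) * φ (gact g x) ∂μ) ∂(ν s) =
      κ s * ∫ x, φ x ∂(ν s)

/-! ## the Markov walk and the changed measures -/

/-- `G_n = g_n ⋯ g_1` where `g_k = ω (k - 1)`. -/
def prodPath (ω : ℕ → GLV d) : ℕ → GLV d
  | 0 => 1
  | n + 1 => ω n * prodPath ω n

/-- the Markov chain `X_n = G_n · x` (with `X_0 = x`). -/
def Xc (x : PV d) (ω : ℕ → GLV d) (n : ℕ) : PV d := gact (prodPath ω n) x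

/-- the Markov walk `S_n = Σ_{k=1}^n σ(g_k, X_{k-1})` (with `S_0 = 0`). -/
def Sc (x : PV d) (ω : ℕ → GLV d) : ℕ → ℝ
  | 0 => 0
  | n + 1 => Sc x ω n + cocycle (ω n) (Xc x ω n)

/-- the event `{τ_y > n} = {y - S_k ≥ 0 for all 1 ≤ k ≤ n}`,
where `τ_y = inf {k ≥ 1 : y - S_k < 0}`. -/
def stayEvent (x : PV d) (y : ℝ) (n : ℕ) : Set (ℕ → GLV d) :=
  {ω | ∀ k, 1 ≤ k → k ≤ n → 0 ≤ y - Sc x ω k}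

/-- `G_n = g_{n-1} ⋯ g_0` for a finite tuple of group elements. -/
def prodTup {n : ℕ} (gs : Fin n → GLV d) : GLV d := ((List.ofFn gs).reverse).prod

/-- The changed measure `Q_s^x` on `𝔾^ℕ`, characterized by its finite dimensional
marginals `κ(s)^{-n} e^{s σ(G_n,x)} (r_s(G_n·x)/r_s(x)) μ(dg_1)⋯μ(dg_n)`. -/
structure ChangedMeasure (d : ℕ) (μ : Measure (GLV d)) (es : EigenSystem d μ) (s : ℝ) where
  Q : PV d → Measure (ℕ → GLV d)
  prob : ∀ x, IsProbabilityMeasure (Q x)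
  marg : ∀ (x : PV d) (n : ℕ),
    Measure.map (fun ω (i : Fin n) => ω i) (Q x) =
      (Measure.pi fun _ : Fin n => μ).withDensity fun gs =>
        ENNReal.ofReal ((es.κ s ^ n)⁻¹ * Real.exp (s * cocycle (prodTup gs) x) *
          (es.r s (gact (prodTup gs) x) / es.r s x))

/-- the invariant probability measure `π_s` of the Markov chain `(X_n)` under the
changed measure `Q_s`. -/
structure InvMeasure (d : ℕ) {μ : Measure (GLV d)} {es : EigenSystem d μ} {s : ℝ}
    (cm : ChangedMeasure d μ es s) where
  π : Measure (PV d)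
  prob : IsProbabilityMeasure π
  inv : ∀ B : Set (PV d), MeasurableSet B →
    ∫⁻ x, Measure.map (fun ω => Xc x ω 1) (cm.Q x) B ∂π = π B

/-- `m` is the uniform (i.e. rotation invariant) probability measure on `ℙ(V)`. -/
def IsUniformP (d : ℕ) (m : Measure (PV d)) : Prop :=
  IsProbabilityMeasure m ∧
    ∀ g : GLV d, (∀ v : V d, ‖(g : V d →L[ℝ] V d) v‖ = ‖v‖) →
      Measure.map (gact g) m = m

/-- Condition A3: the invariant measure `ν = ν_0` has a strictly positive density with
respect to the uniform probability measure on `ℙ(V)`. -/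
structure CondA3 (d : ℕ) {μ : Measure (GLV d)} (es : EigenSystem d μ) where
  m : Measure (PV d)
  unif : IsUniformP d m
  dens : PV d → ℝ
  dens_pos : ∀ x, 0 < dens x
  dens_meas : Measurable dens
  eq : es.ν 0 = m.withDensity fun x => ENNReal.ofReal (dens x)

/-- a strictly positive density `π̇_s` of `π_s` with respect to the uniform
probability measure on `ℙ(V)`. -/
structure PiDensity (d : ℕ) (π : Measure (PV d)) where
  m : Measure (PV d)
  unif : IsUniformP d m
  dens : PV d → ℝ
  dens_pos : ∀ x, 0 < dens x
  dens_meas : Measurable dens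
  eq : π = m.withDensity fun x => ENNReal.ofReal (dens x)

/-- The dual changed measure `Q_s^{x,*}` on `𝔾^ℕ`, characterized by its finite
dimensional marginals
`κ(s)^{-n} e^{-(s+d)σ(G_n,x)} (r_s(x)/r_s(G_n·x)) (π̇_s(G_n·x)/π̇_s(x)) |det G_n| μ̌(dg_1)⋯μ̌(dg_n)`,
where `μ̌` is the image of `μ` under `g ↦ g⁻¹`. -/
structure DualMeasure (d : ℕ) (μ : Measure (GLV d)) (es : EigenSystem d μ) (s : ℝ)
    (πdens : PV d → ℝ) where
  Q : PV d → Measure (ℕ → GLV d)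
  prob : ∀ x, IsProbabilityMeasure (Q x)
  marg : ∀ (x : PV d) (n : ℕ),
    Measure.map (fun ω (i : Fin n) => ω i) (Q x) =
      (Measure.pi fun _ : Fin n => Measure.map (fun g : GLV d => g⁻¹) μ).withDensity fun gs =>
        ENNReal.ofReal ((es.κ s ^ n)⁻¹ *
          Real.exp (-(s + d) * cocycle (prodTup gs) x) *
          (es.r s x / es.r s (gact (prodTup gs) x)) *
          (πdens (gact (prodTup gs) x) / πdens x) * |detv (prodTup gs)|)

/-- `σ_s = sqrt (Λ''(s))` with `Λ = log κ`. -/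
def sigS {d : ℕ} {μ : Measure (GLV d)} (es : EigenSystem d μ) (s : ℝ) : ℝ :=
  Real.sqrt (iteratedDeriv 2 (fun t => Real.log (es.κ t)) s)

/-- `𝔼_{Q_s^x}[h(X_n, y - S_n); τ_y > n]`. -/
def condExpec {d : ℕ} {μ : Measure (GLV d)} {es : EigenSystem d μ} {s : ℝ}
    (cm : ChangedMeasure d μ es s) (h : PV d × ℝ → ℝ) (x : PV d) (y : ℝ) (n : ℕ) : ℝ :=
  ∫ ω in stayEvent x y n, h (Xc x ω n, y - Sc x ω n) ∂cm.Q x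

/-- harmonic function data: `V_s(x,y) = lim_n 𝔼_{Q_s^x}[(y - S_n); τ_y > n]`. -/
structure HarmonicFn (d : ℕ) {μ : Measure (GLV d)} {es : EigenSystem d μ} {s : ℝ}
    (cm : ChangedMeasure d μ es s) where
  Vs : PV d → ℝ → ℝ
  tendsto : ∀ (x : PV d) (y : ℝ), 0 ≤ y →
    Tendsto (fun n => ∫ ω in stayEvent x y n, (y - Sc x ω n) ∂cm.Q x) atTop (nhds (Vs x y))

/-- the martingale `M_n = Σ_{k=1}^n σ₀(g_k, X_{k-1})` associated with a solution `θ`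
of the cohomological equation, where `σ₀(g,x) = σ(g,x) - θ(x) + θ(g·x)`. -/
def Mart {d : ℕ} (θ : PV d → ℝ) (x : PV d) (ω : ℕ → GLV d) (n : ℕ) : ℝ :=
  ∑ k ∈ Finset.range n,
    (cocycle (ω k) (Xc x ω k) - θ (Xc x ω k) + θ (gact (ω k) (Xc x ω k)))

/-! ## the class `ℋ` of target functions -/

/-- membership in the class `ℋ`. -/
structure MemH (d : ℕ) (h : PV d × ℝ → ℝ) : Prop where
  cont : ∀ t : ℝ, Continuous fun x => h (x, t)
  meas : ∀ x : PV d, Measurable fun t => h (x, t)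
  bdd : ∀ t : ℝ, BddAbove (range fun x : PV d => |h (x, t)|)
  int : Integrable (fun t : ℝ => ⨆ x : PV d, |h (x, t)|)

/-- `‖h‖_ℋ = ∫_ℝ sup_x |h(x,t)| dt`. -/
def normH (d : ℕ) (h : PV d × ℝ → ℝ) : ℝ := ∫ t : ℝ, ⨆ x : PV d, |h (x, t)|

/-- `‖h‖_{π ⊗ Leb} = ∫∫ |h(x,t)| π(dx) dt`. -/
def normPiLeb (d : ℕ) (π : Measure (PV d)) (h : PV d × ℝ → ℝ) : ℝ :=
  ∫ x, (∫ t : ℝ, |h (x, t)|) ∂π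

/-- `h ≤_ε h'`: `h(x,t) ≤ h'(x, t + v)` for all `x`, `t` and `|v| ≤ ε`. -/
def LeEps (d : ℕ) (ε : ℝ) (h h' : PV d × ℝ → ℝ) : Prop :=
  ∀ (x : PV d) (t v : ℝ), |v| ≤ ε → h (x, t) ≤ h' (x, t + v)

/-- `h' ≤_ε h` in the lower sense: `h'(x, t + v) ≤ h(x,t)` for all `x`, `t`, `|v| ≤ ε`. -/
def LeEpsLower (d : ℕ) (ε : ℝ) (h' h : PV d × ℝ → ℝ) : Prop :=
  ∀ (x : PV d) (t v : ℝ), |v| ≤ ε → h' (x, t + v) ≤ h (x, t)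

/-- the standard normal density `φ`. -/
def gaussD (u : ℝ) : ℝ := (Real.sqrt (2 * Real.pi))⁻¹ * Real.exp (-u ^ 2 / 2)

/-- the Rayleigh density `φ⁺(t) = t e^{-t²/2} 1_{t ≥ 0}`. -/
def rayleighD (t : ℝ) : ℝ := if 0 ≤ t then t * Real.exp (-t ^ 2 / 2) else 0

/-- the Rayleigh distribution function `Φ⁺(t) = (1 - e^{-t²/2}) 1_{t ≥ 0}`. -/
def rayleighCDF (t : ℝ) : ℝ := if 0 ≤ t then 1 - Real.exp (-t ^ 2 / 2) else 0

variable {d : ℕ}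

set_option maxHeartbeats 2000000 in
set_option synthInstance.maxHeartbeats 2000000 in
instance instSC : SecondCountableTopology (V d →L[ℝ] V d) := inferInstance

set_option maxHeartbeats 2000000 in
set_option synthInstance.maxHeartbeats 2000000 in
instance instSCG : SecondCountableTopology (GLV d) :=
  (Units.isEmbedding_embedProduct).toIsInducing.secondCountableTopology

lemma apply_ne_zero (g : GLV d) {v : V d} (hv : v ≠ 0) : (g : V d →L[ℝ] V d) v ≠ 0 := by
  intro h
  apply hv
  have : (fun w : V d => (g : V d →L[ℝ] V d) w) v
      = (fun w : V d => (g : V d →L[ℝ] V d) w) 0 := by simpa using h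
  simpa using unit_injective g this

lemma gact_mk (g : GLV d) {v : V d} (hv : v ≠ 0) :
    gact g (Projectivization.mk ℝ v hv) =
      Projectivization.mk ℝ ((g : V d →L[ℝ] V d) v) (apply_ne_zero g hv) := by
  unfold gact
  rw [Projectivization.map_mk]
  rfl

lemma cocycle_mk (g : GLV d) {v : V d} (hv : v ≠ 0) :
    cocycle g (Projectivization.mk ℝ v hv) =
      Real.log (‖(g : V d →L[ℝ] V d) v‖ / ‖v‖) := by
  unfold cocycle
  obtain ⟨a, ha⟩ := Projectivization.exists_smul_eq_mk_rep ℝ v hv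
  rw [← ha]
  have h2 : (a • v : V d) = (a : ℝ) • v := rfl
  rw [h2, (g : V d →L[ℝ] V d).map_smul, norm_smul, norm_smul]
  have ha0 : ‖(a : ℝ)‖ ≠ 0 := by simp [Units.ne_zero a]
  rw [mul_div_mul_left _ _ ha0]

lemma cocycle_one (x : PV d) : cocycle (1 : GLV d) x = 0 := by
  unfold cocycle
  simp [div_self (norm_ne_zero_iff.2 x.rep_nonzero)]

lemma gact_mul (g p : GLV d) (x : PV d) : gact (g * p) x = gact g (gact p x) := by
  rw [← x.mk_rep, gact_mk, gact_mk, gact_mk]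
  simp [Units.val_mul]

lemma cocycle_mul (g p : GLV d) (x : PV d) :
    cocycle (g * p) x = cocycle g (gact p x) + cocycle p x := by
  rw [← x.mk_rep, gact_mk, cocycle_mk, cocycle_mk, cocycle_mk]
  have h1 : ((g * p : GLV d) : V d →L[ℝ] V d) x.rep
      = (g : V d →L[ℝ] V d) ((p : V d →L[ℝ] V d) x.rep) := by
    simp [Units.val_mul]
  rw [h1]
  have hpv : (p : V d →L[ℝ] V d) x.rep ≠ 0 := apply_ne_zero p x.rep_nonzero
  have hgpv : (g : V d →L[ℝ] V d) ((p : V d →L[ℝ] V d) x.rep) ≠ 0 :=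
    apply_ne_zero g hpv
  rw [Real.log_div (norm_ne_zero_iff.2 hgpv) (norm_ne_zero_iff.2 hpv),
    Real.log_div (norm_ne_zero_iff.2 hpv) (norm_ne_zero_iff.2 x.rep_nonzero),
    Real.log_div (norm_ne_zero_iff.2 hgpv) (norm_ne_zero_iff.2 x.rep_nonzero)]
  ring


lemma gact_eq (g : GLV d) (x : PV d) :
    gact g x = Projectivization.mk ℝ ((g : V d →L[ℝ] V d) x.rep)
      (apply_ne_zero g x.rep_nonzero) := by
  conv_lhs => rw [← x.mk_rep]
  exact gact_mk g x.rep_nonzero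

lemma cocycle_eq (g : GLV d) (x : PV d) :
    cocycle g x = Real.log (‖(g : V d →L[ℝ] V d) x.rep‖ / ‖x.rep‖) := by
  conv_lhs => rw [← x.mk_rep]
  exact cocycle_mk g x.rep_nonzero

lemma continuous_apply_rep (x : PV d) :
    Continuous fun g : GLV d => (g : V d →L[ℝ] V d) x.rep :=
  ((ContinuousLinearMap.apply ℝ (V d) x.rep).continuous).comp Units.continuous_val

lemma continuous_gact_right (x : PV d) : Continuous fun g : GLV d => gact g x := by
  have h : (fun g : GLV d => gact g x) = fun g : GLV d =>
      Projectivization.mk ℝ ((g : V d →L[ℝ] V d) x.rep) (apply_ne_zero g x.rep_nonzero) :=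
    funext fun g => gact_eq g x
  rw [h]
  have hc : Continuous fun g : GLV d =>
      (⟨(g : V d →L[ℝ] V d) x.rep, apply_ne_zero g x.rep_nonzero⟩ :
        {v : V d // v ≠ 0}) :=
    (continuous_apply_rep x).subtype_mk _
  exact continuous_quotient_mk'.comp hc

lemma measurable_gact_right (x : PV d) : Measurable fun g : GLV d => gact g x :=
  (continuous_gact_right x).measurable

lemma measurable_cocycle_right (x : PV d) : Measurable fun g : GLV d => cocycle g x := by
  have h : (fun g : GLV d => cocycle g x) = fun g : GLV d =>
      Real.log (‖(g : V d →L[ℝ] V d) x.rep‖ / ‖x.rep‖) :=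
    funext fun g => cocycle_eq g x
  rw [h]
  exact Real.measurable_log.comp (((continuous_apply_rep x).norm.div_const _).measurable)

lemma prodTup_zero (gs : Fin 0 → GLV d) : prodTup gs = 1 := by
  simp [prodTup]

lemma prodTup_succ {m : ℕ} (gs : Fin (m + 1) → GLV d) :
    prodTup gs = gs (Fin.last m) * prodTup (fun i => gs i.castSucc) := by
  unfold prodTup
  rw [List.ofFn_succ', List.concat_eq_append, List.reverse_append]
  simp

lemma measurable_prodTup : ∀ m : ℕ, Measurable (fun gs : Fin m → GLV d => prodTup gs) := by
  intro m
  induction m with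
  | zero =>
    simp only [prodTup_zero]
    exact measurable_const
  | succ m ih =>
    simp only [prodTup_succ]
    exact (measurable_pi_apply _).mul
      (ih.comp (measurable_pi_lambda _ fun i => measurable_pi_apply _))

lemma prodPath_eq (ω : ℕ → GLV d) : ∀ m : ℕ, prodPath ω m = prodTup (fun i : Fin m => ω i)
  | 0 => by simp [prodPath, prodTup_zero]
  | m + 1 => by
    rw [show prodPath ω (m + 1) = ω m * prodPath ω m from rfl, prodPath_eq ω m,
      prodTup_succ]
    rfl

lemma Sc_eq (x : PV d) (ω : ℕ → GLV d) : ∀ m : ℕ, Sc x ω m = cocycle (prodPath ω m) x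
  | 0 => by simp [Sc, prodPath, cocycle_one]
  | m + 1 => by
    rw [show Sc x ω (m + 1) = Sc x ω m + cocycle (ω m) (Xc x ω m) from rfl,
      Sc_eq x ω m, show prodPath ω (m + 1) = ω m * prodPath ω m from rfl,
      cocycle_mul]
    rw [show Xc x ω m = gact (prodPath ω m) x from rfl]
    ring

lemma Gu_take {Ω : Type} [MeasurableSpace Ω] (b : BRW d Ω) (u : List ℕ) (ω : Ω)
    {k : ℕ} (hk : k + 1 ≤ u.length) :
    b.Gu (u.take (k + 1)) ω = prodTup (fun j : Fin (k + 1) => b.mark (u.take (j + 1)) ω) := by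
  unfold BRW.Gu prodTup
  congr 2
  rw [List.length_take, min_eq_left hk]
  apply List.ext_getElem
  · simp
  · intro i h1 h2
    simp only [List.getElem_map, List.getElem_range, List.getElem_ofFn]
    congr 1
    rw [List.take_take]
    congr 1
    simp at h1
    omega


lemma measurable_sum_range {α : Type*} [MeasurableSpace α] {N : α → ℕ} (hN : Measurable N)
    {g : ℕ → α → ℝ≥0∞} (hg : ∀ i, Measurable (g i)) :
    Measurable fun a => ∑ i ∈ Finset.range (N a), g i a := by
  have key : (fun a => ∑ i ∈ Finset.range (N a), g i a)
      = fun a => ∑' i : ℕ, if i < N a then g i a else 0 := by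
    funext a
    rw [tsum_eq_sum (s := Finset.range (N a))
      (fun i hi => if_neg (fun hlt => hi (Finset.mem_range.mpr hlt)))]
    exact Finset.sum_congr rfl fun i hi => (if_pos (Finset.mem_range.mp hi)).symm
  rw [key]
  exact Measurable.ennreal_tsum fun i =>
    Measurable.ite (hN MeasurableSet.of_discrete) (hg i) measurable_const

lemma sum_range_eq_tsum {N : ℕ} {g : ℕ → ℝ≥0∞} :
    ∑ i ∈ Finset.range N, g i = ∑' i : ℕ, if i < N then g i else 0 := by
  rw [tsum_eq_sum (s := Finset.range N)
    (fun i hi => if_neg (fun hlt => hi (Finset.mem_range.mpr hlt)))]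
  exact Finset.sum_congr rfl fun i hi => (if_pos (Finset.mem_range.mp hi)).symm

section BRWpart

variable {Ω : Type} [MeasurableSpace Ω] (b : BRW d Ω) {μ : Measure (GLV d)}

/-- the reproduction data attached to node `u`. -/
def tupBRW (u : List ℕ) (ω : Ω) : ℕ × (ℕ → GLV d) :=
  (b.Noff u ω, fun i => b.mark (u ++ [i]) ω)

lemma measurable_tupBRW (u : List ℕ) : Measurable (tupBRW b u) :=
  (b.measN u).prodMk (measurable_pi_lambda _ fun i => b.measMark _)

lemma measurableSet_alive (u : List ℕ) : MeasurableSet {ω | b.alive u ω} := by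
  have : {ω | b.alive u ω}
      = ⋂ k : Fin u.length, {ω | u.get k < b.Noff (u.take k) ω} := by
    ext ω; simp [BRW.alive, Set.mem_iInter]
  rw [this]
  exact MeasurableSet.iInter fun k => (b.measN _) MeasurableSet.of_discrete

lemma intensity (hlaw : b.IsBRWLaw μ) [IsProbabilityMeasure μ]
    {f : GLV d → ℝ≥0∞} (hf : Measurable f) :
    ∫⁻ ω, ∑ i ∈ Finset.range (b.Noff [] ω), f (b.mark [i] ω) ∂b.PP
      = ENNReal.ofReal b.EN * ∫⁻ g, f g ∂μ := by
  refine Measurable.ennreal_induction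
    (motive := fun f => ∫⁻ ω, ∑ i ∈ Finset.range (b.Noff [] ω), f (b.mark [i] ω) ∂b.PP
      = ENNReal.ofReal b.EN * ∫⁻ g, f g ∂μ) ?_ ?_ ?_ hf
  · intro c s hs
    have h1 : ∀ y : GLV d, s.indicator (fun _ => c) y
        = c * s.indicator (fun _ => (1 : ℝ≥0∞)) y := by
      intro y
      by_cases hy : y ∈ s <;> simp [Set.indicator_apply, hy]
    have hm1 : Measurable fun ω => ∑ i ∈ Finset.range (b.Noff [] ω),
        s.indicator (fun _ => (1 : ℝ≥0∞)) (b.mark [i] ω) :=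
      measurable_sum_range (b.measN [])
        (fun i => (measurable_const.indicator hs).comp (b.measMark [i]))
    simp only [h1]
    rw [show (fun ω => ∑ i ∈ Finset.range (b.Noff [] ω),
          c * s.indicator (fun _ => (1 : ℝ≥0∞)) (b.mark [i] ω))
        = fun ω => c * ∑ i ∈ Finset.range (b.Noff [] ω),
          s.indicator (fun _ => (1 : ℝ≥0∞)) (b.mark [i] ω) from
      funext fun ω => (Finset.mul_sum _ _ _).symm]
    rw [lintegral_const_mul c hm1, ← hlaw s hs,
      lintegral_const_mul c (measurable_const.indicator hs), lintegral_indicator hs]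
    simp only [lintegral_one, Measure.restrict_apply_univ]
    ring
  · intro f g _ hfm hgm hPf hPg
    have hmf : Measurable fun ω => ∑ i ∈ Finset.range (b.Noff [] ω), f (b.mark [i] ω) :=
      measurable_sum_range (b.measN []) fun i => hfm.comp (b.measMark [i])
    simp only [Pi.add_apply, Finset.sum_add_distrib]
    rw [lintegral_add_left hmf, hPf, hPg, lintegral_add_left hfm, mul_add]
  · intro f hfm hmono hPf
    simp only [iSup_apply]
    have h1 : ∀ ω, ∑ i ∈ Finset.range (b.Noff [] ω), ⨆ n, f n (b.mark [i] ω)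
        = ⨆ n, ∑ i ∈ Finset.range (b.Noff [] ω), f n (b.mark [i] ω) := by
      intro ω
      exact ENNReal.finsetSum_iSup_of_monotone fun i => fun a b hab => hmono hab _
    have hmn : ∀ n, Measurable fun ω => ∑ i ∈ Finset.range (b.Noff [] ω),
        f n (b.mark [i] ω) :=
      fun n => measurable_sum_range (b.measN []) fun i => (hfm n).comp (b.measMark [i])
    simp only [h1]
    rw [lintegral_iSup hmn
      (fun a b hab ω => Finset.sum_le_sum fun i _ => hmono hab _)]
    simp only [hPf]
    rw [lintegral_iSup hfm hmono, ENNReal.mul_iSup]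


lemma take_succ_get (v : List ℕ) (k : Fin v.length) :
    v.take (k + 1) = v.take k ++ [v.get k] := by
  rw [List.take_succ]
  simp [List.getElem?_eq_getElem k.isLt, List.get_eq_getElem]

set_option synthInstance.maxHeartbeats 2000000 in
set_option maxHeartbeats 2000000 in
lemma step (hlaw : b.IsBRWLaw μ) [IsProbabilityMeasure μ] (v : List ℕ)
    {F : (Fin v.length → GLV d) → GLV d → ℝ≥0∞}
    (hF : Measurable fun p : (Fin v.length → GLV d) × GLV d => F p.1 p.2) :
    ∫⁻ ω, (if b.alive v ω then
        ∑ i ∈ Finset.range (b.Noff v ω),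
          F (fun k => b.mark (v.take (k + 1)) ω) (b.mark (v ++ [i]) ω) else 0) ∂b.PP
      = ENNReal.ofReal b.EN *
        ∫⁻ ω, (if b.alive v ω then
          ∫⁻ g, F (fun k => b.mark (v.take (k + 1)) ω) g ∂μ else 0) ∂b.PP := by
  haveI := b.prob
  haveI : SFinite μ := inferInstance
  set T : Ω → (Fin v.length → ℕ × (ℕ → GLV d)) := fun ω j => tupBRW b (v.take j) ω
    with hTdef
  set Y : Ω → ℕ × (ℕ → GLV d) := tupBRW b v with hYdef
  have hT : Measurable T := measurable_pi_lambda _ fun j => measurable_tupBRW b _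
  have hY : Measurable Y := measurable_tupBRW b v
  set γ : (Fin v.length → ℕ × (ℕ → GLV d)) → (Fin v.length → GLV d) :=
    fun t k => (t k).2 (v.get k) with hγdef
  have hγ : Measurable γ := measurable_pi_lambda _ fun k =>
    (measurable_pi_apply (v.get k)).comp (measurable_snd.comp (measurable_pi_apply k))
  set A : Set (Fin v.length → ℕ × (ℕ → GLV d)) := {t | ∀ j, v.get j < (t j).1} with hAdef
  have hA : MeasurableSet A := by
    have h : A = ⋂ j, {t : Fin v.length → ℕ × (ℕ → GLV d) | v.get j < (t j).1} := by
      ext t; simp [hAdef, Set.mem_iInter]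
    rw [h]
    exact MeasurableSet.iInter fun j =>
      (measurable_fst.comp (measurable_pi_apply j)) MeasurableSet.of_discrete
  have key1 : ∀ ω, b.alive v ω ↔ T ω ∈ A := fun ω => Iff.rfl
  have key2 : ∀ ω, (fun k : Fin v.length => b.mark (v.take (k + 1)) ω) = γ (T ω) := by
    intro ω
    funext k
    show b.mark (v.take (k + 1)) ω = b.mark (v.take k ++ [v.get k]) ω
    rw [take_succ_get]
  set G : (Fin v.length → GLV d) → ℝ≥0∞ := fun gs => ∫⁻ g, F gs g ∂μ with hGdef
  have hG : Measurable G := hF.lintegral_prod_right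
  set ψ : (Fin v.length → ℕ × (ℕ → GLV d)) × (ℕ × (ℕ → GLV d)) → ℝ≥0∞ :=
    fun p => if p.1 ∈ A then ∑ i ∈ Finset.range p.2.1, F (γ p.1) (p.2.2 i) else 0
    with hψdef
  have hψapp : ∀ (t : Fin v.length → ℕ × (ℕ → GLV d)) (y : ℕ × (ℕ → GLV d)),
      ψ (t, y) = if t ∈ A then ∑ i ∈ Finset.range y.1, F (γ t) (y.2 i) else 0 :=
    fun t y => rfl
  have hψ : Measurable ψ := by
    refine Measurable.ite (measurable_fst hA) ?_ measurable_const
    exact measurable_sum_range (measurable_fst.comp measurable_snd)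
      (fun i => hF.comp ((hγ.comp measurable_fst).prodMk
        ((measurable_pi_apply i).comp (measurable_snd.comp measurable_snd))))
  have hind : IndepFun T Y b.PP := by
    set S : Finset (List ℕ) :=
      Finset.image (fun j : Fin v.length => v.take ↑j) Finset.univ with hS
    have hvS : v ∉ S := by
      intro hv
      simp only [hS, Finset.mem_image] at hv
      obtain ⟨j, -, hj⟩ := hv
      have := congrArg List.length hj
      simp [List.length_take] at this
      omega
    have hdis : Disjoint S ({v} : Finset (List ℕ)) := by
      simp [Finset.disjoint_singleton_right, hvS]
    have h0 := b.indep.indepFun_finset S {v} hdis (fun u => measurable_tupBRW b u)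
    have hmem : ∀ j : Fin v.length, v.take ↑j ∈ S := by
      intro j; simp [hS]
    have hvmem : v ∈ ({v} : Finset (List ℕ)) := Finset.mem_singleton_self v
    exact h0.comp
      (measurable_pi_lambda
        (fun (t : S → ℕ × (ℕ → GLV d)) (j : Fin v.length) => t ⟨v.take ↑j, hmem j⟩)
        (fun j => measurable_pi_apply _))
      (measurable_pi_apply (⟨v, hvmem⟩ : ({v} : Finset (List ℕ))))
  have hmap : Measure.map (fun ω => (T ω, Y ω)) b.PP
      = (Measure.map T b.PP).prod (Measure.map Y b.PP) :=
    (ProbabilityTheory.indepFun_iff_map_prod_eq_prod_map_map hT.aemeasurable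
      hY.aemeasurable).mp hind
  haveI : IsProbabilityMeasure (Measure.map T b.PP) :=
    Measure.isProbabilityMeasure_map hT.aemeasurable
  haveI : IsProbabilityMeasure (Measure.map Y b.PP) :=
    Measure.isProbabilityMeasure_map hY.aemeasurable
  have lhs_eq : (fun ω => (if b.alive v ω then
      ∑ i ∈ Finset.range (b.Noff v ω),
        F (fun k => b.mark (v.take (k + 1)) ω) (b.mark (v ++ [i]) ω) else 0))
      = fun ω => ψ (T ω, Y ω) := by
    funext ω
    rw [hψapp (T ω) (Y ω)]
    by_cases hal : b.alive v ω
    · rw [if_pos hal, if_pos ((key1 ω).mp hal)]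
      simp only [key2 ω]
      rfl
    · rw [if_neg hal, if_neg (fun hmem => hal ((key1 ω).mpr hmem))]
  have inner : ∀ t, ∫⁻ y, ψ (t, y) ∂(Measure.map Y b.PP)
      = if t ∈ A then ENNReal.ofReal b.EN * G (γ t) else 0 := by
    intro t
    by_cases ht : t ∈ A
    · simp only [hψapp, if_pos ht]
      have hmeasy : Measurable fun y : ℕ × (ℕ → GLV d) =>
          ∑ i ∈ Finset.range y.1, F (γ t) (y.2 i) :=
        measurable_sum_range measurable_fst
          (fun i => hF.comp (measurable_const.prodMk
            ((measurable_pi_apply i).comp measurable_snd)))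
      rw [lintegral_map hmeasy hY]
      exact ((b.ident v List.nil).comp hmeasy).lintegral_eq.trans
        (intensity b hlaw (hF.comp (measurable_const.prodMk measurable_id)))
    · simp only [hψapp, if_neg ht, lintegral_zero]
  calc ∫⁻ ω, (if b.alive v ω then
        ∑ i ∈ Finset.range (b.Noff v ω),
          F (fun k => b.mark (v.take (k + 1)) ω) (b.mark (v ++ [i]) ω) else 0) ∂b.PP
      = ∫⁻ ω, ψ (T ω, Y ω) ∂b.PP := by rw [lhs_eq]
    _ = ∫⁻ p, ψ p ∂(Measure.map (fun ω => (T ω, Y ω)) b.PP) :=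
        (lintegral_map hψ (hT.prodMk hY)).symm
    _ = ∫⁻ p, ψ p ∂((Measure.map T b.PP).prod (Measure.map Y b.PP)) := by rw [hmap]
    _ = ∫⁻ t, ∫⁻ y, ψ (t, y) ∂(Measure.map Y b.PP) ∂(Measure.map T b.PP) :=
        lintegral_prod _ hψ.aemeasurable
    _ = ∫⁻ t, (if t ∈ A then ENNReal.ofReal b.EN * G (γ t) else 0)
          ∂(Measure.map T b.PP) := lintegral_congr fun t => inner t
    _ = ∫⁻ t, ENNReal.ofReal b.EN * (if t ∈ A then G (γ t) else 0)
          ∂(Measure.map T b.PP) := by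
        refine lintegral_congr fun t => ?_
        by_cases ht : t ∈ A <;> simp [ht]
    _ = ENNReal.ofReal b.EN * ∫⁻ t, (if t ∈ A then G (γ t) else 0)
          ∂(Measure.map T b.PP) :=
        lintegral_const_mul _ (Measurable.ite hA (hG.comp hγ) measurable_const)
    _ = ENNReal.ofReal b.EN * ∫⁻ ω, (if T ω ∈ A then G (γ (T ω)) else 0) ∂b.PP := by
        congr 1
        exact lintegral_map (Measurable.ite hA (hG.comp hγ) measurable_const) hT
    _ = ENNReal.ofReal b.EN * ∫⁻ ω, (if b.alive v ω then
          ∫⁻ g, F (fun k => b.mark (v.take (k + 1)) ω) g ∂μ else 0) ∂b.PP := by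
        congr 1
        refine lintegral_congr fun ω => ?_
        by_cases hal : b.alive v ω
        · rw [if_pos ((key1 ω).mp hal), if_pos hal]
          rw [← key2 ω]
        · rw [if_neg (fun hmem => hal ((key1 ω).mpr hmem)), if_neg hal]

lemma measurable_snocFun {n : ℕ} :
    Measurable fun p : (Fin n → GLV d) × GLV d => (Fin.snoc p.1 p.2 : Fin (n + 1) → GLV d) := by
  apply measurable_pi_lambda
  intro j
  refine Fin.lastCases ?_ ?_ j
  · simp only [Fin.snoc_last]
    exact measurable_snd
  · intro k
    simp only [Fin.snoc_castSucc]
    exact (measurable_pi_apply k).comp measurable_fst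

set_option synthInstance.maxHeartbeats 1000000 in
set_option maxHeartbeats 1000000 in
lemma lintegral_pi_snoc {n : ℕ} {μ : Measure (GLV d)} [IsProbabilityMeasure μ]
    {F : (Fin (n + 1) → GLV d) → ℝ≥0∞} (hF : Measurable F) :
    ∫⁻ gs, F gs ∂(Measure.pi fun _ : Fin (n + 1) => μ)
      = ∫⁻ gs, ∫⁻ g, F (Fin.snoc gs g) ∂μ ∂(Measure.pi fun _ : Fin n => μ) := by
  have mp := measurePreserving_piFinSuccAbove (fun _ : Fin (n + 1) => μ) (Fin.last n)
  have hmeas2 : Measurable fun p : GLV d × (Fin n → GLV d) => F (Fin.snoc p.2 p.1) :=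
    hF.comp (measurable_snocFun.comp (measurable_snd.prodMk measurable_fst))
  calc ∫⁻ gs, F gs ∂(Measure.pi fun _ : Fin (n + 1) => μ)
      = ∫⁻ gs, (fun p : GLV d × (Fin n → GLV d) => F (Fin.snoc p.2 p.1))
          ((MeasurableEquiv.piFinSuccAbove (fun _ : Fin (n + 1) => GLV d) (Fin.last n)) gs)
          ∂(Measure.pi fun _ : Fin (n + 1) => μ) := by
        refine lintegral_congr fun gs => ?_
        simp only [MeasurableEquiv.piFinSuccAbove_apply, Fin.insertNthEquiv_symm_apply]
        rw [← Fin.insertNth_last']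
        rw [Fin.insertNth_self_removeNth]
    _ = ∫⁻ p, (fun p : GLV d × (Fin n → GLV d) => F (Fin.snoc p.2 p.1)) p
          ∂(μ.prod (Measure.pi fun _ : Fin n => μ)) := mp.lintegral_comp hmeas2
    _ = ∫⁻ g, ∫⁻ gs, F (Fin.snoc gs g) ∂(Measure.pi fun _ : Fin n => μ) ∂μ :=
        lintegral_prod _ hmeas2.aemeasurable
    _ = ∫⁻ gs, ∫⁻ g, F (Fin.snoc gs g) ∂μ ∂(Measure.pi fun _ : Fin n => μ) :=
        lintegral_lintegral_swap hmeas2.aemeasurable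

lemma measurable_term {m : ℕ} {Fm : (Fin m → GLV d) → ℝ≥0∞} (hFm : Measurable Fm)
    (u : List ℕ) :
    Measurable fun ω => if u.length = m ∧ b.alive u ω then
      Fm (fun k : Fin m => b.mark (u.take (k + 1)) ω) else 0 := by
  by_cases hl : u.length = m
  · have hset : MeasurableSet {ω | u.length = m ∧ b.alive u ω} := by
      simpa [hl] using measurableSet_alive b u
    exact Measurable.ite hset
      (hFm.comp (measurable_pi_lambda _ fun k => b.measMark _)) measurable_const
  · simp only [hl, false_and, if_false]
    exact measurable_const

lemma alive_nil (ω : Ω) : b.alive ([] : List ℕ) ω := fun k => k.elim0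

lemma alive_concat (v : List ℕ) (i : ℕ) (ω : Ω) :
    b.alive (v ++ [i]) ω ↔ b.alive v ω ∧ i < b.Noff v ω := by
  constructor
  · intro h
    constructor
    · intro k
      have hk : (k : ℕ) < (v ++ [i]).length := by simp
      have h2 := h ⟨k, hk⟩
      simp only [List.get_eq_getElem] at h2 ⊢
      rwa [List.getElem_append_left k.isLt,
        List.take_append_of_le_length (le_of_lt k.isLt)] at h2
    · have hk : v.length < (v ++ [i]).length := by simp
      have h2 := h ⟨v.length, hk⟩
      simp only [List.get_eq_getElem] at h2
      rwa [List.getElem_concat_length rfl,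
        List.take_append_of_le_length (le_refl _), List.take_length] at h2
  · rintro ⟨h1, h2⟩
    intro k
    have hk : (k : ℕ) < v.length + 1 := by
      have := k.isLt; simpa using this
    simp only [List.get_eq_getElem]
    rcases Nat.lt_or_ge (k : ℕ) v.length with hlt | hge
    · rw [List.getElem_append_left hlt, List.take_append_of_le_length (le_of_lt hlt)]
      exact h1 ⟨k, hlt⟩
    · have hke : (k : ℕ) = v.length := by omega
      rw [List.getElem_concat_length hke]
      rw [hke, List.take_append_of_le_length (le_refl _), List.take_length]
      exact h2

set_option synthInstance.maxHeartbeats 1000000 in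
set_option maxHeartbeats 3000000 in
lemma manyToOneENN (hlaw : b.IsBRWLaw μ) [IsProbabilityMeasure μ] :
    ∀ (n : ℕ) (F : (Fin n → GLV d) → ℝ≥0∞), Measurable F →
    ∫⁻ ω, ∑' u : List ℕ, (if u.length = n ∧ b.alive u ω then
        F (fun k : Fin n => b.mark (u.take (k + 1)) ω) else 0) ∂b.PP
      = (ENNReal.ofReal b.EN) ^ n *
          ∫⁻ gs, F gs ∂(Measure.pi fun _ : Fin n => μ) := by
  haveI := b.prob
  intro n
  induction n with
  | zero =>
    intro F hF
    have h1 : ∀ ω, (∑' u : List ℕ, (if u.length = 0 ∧ b.alive u ω then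
        F (fun k : Fin 0 => b.mark (u.take (k + 1)) ω) else 0))
        = F (fun k : Fin 0 => k.elim0) := by
      intro ω
      rw [tsum_eq_single ([] : List ℕ)]
      · rw [if_pos ⟨rfl, alive_nil b ω⟩]
        exact congrArg F (Subsingleton.elim _ _)
      · intro u hu
        rw [if_neg]
        rintro ⟨hlen, -⟩
        exact hu (List.length_eq_zero_iff.mp hlen)
    simp only [h1]
    rw [lintegral_const, measure_univ, mul_one, pow_zero, one_mul]
    rw [show (fun gs : Fin 0 → GLV d => F gs) = fun _ => F (fun k : Fin 0 => k.elim0)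
      from funext fun gs => congrArg F (Subsingleton.elim _ _)]
    rw [lintegral_const, measure_univ, mul_one]
  | succ n ih =>
    intro F hF
    haveI : SFinite μ := inferInstance
    set G' : (Fin n → GLV d) → ℝ≥0∞ := fun gs => ∫⁻ g, F (Fin.snoc gs g) ∂μ with hG'def
    have hFs : Measurable fun p : (Fin n → GLV d) × GLV d => F (Fin.snoc p.1 p.2) :=
      hF.comp measurable_snocFun
    have hG' : Measurable G' :=
      Measurable.lintegral_prod_right (f := fun gs g => F (Fin.snoc gs g)) hFs
    have he_inj : Function.Injective (fun p : List ℕ × ℕ => p.1 ++ [p.2]) := by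
      intro p q h
      have h1 : p.1 = q.1 := by
        have := congrArg List.dropLast h
        simpa using this
      have h2 : p.2 = q.2 := by
        have := congrArg List.getLast? h
        simpa using this
      exact Prod.ext h1 h2
    have hsum : ∀ ω, (∑' u : List ℕ, (if u.length = n + 1 ∧ b.alive u ω then
        F (fun k : Fin (n + 1) => b.mark (u.take (k + 1)) ω) else 0))
        = ∑' (v : List ℕ) (i : ℕ),
            (if (v ++ [i]).length = n + 1 ∧ b.alive (v ++ [i]) ω then
            F (fun k : Fin (n + 1) => b.mark ((v ++ [i]).take (k + 1)) ω) else 0) := by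
      intro ω
      have hsupp : Function.support (fun u : List ℕ =>
          (if u.length = n + 1 ∧ b.alive u ω then
            F (fun k : Fin (n + 1) => b.mark (u.take (k + 1)) ω) else 0))
          ⊆ Set.range (fun p : List ℕ × ℕ => p.1 ++ [p.2]) := by
        intro u hu
        have hne : u ≠ [] := by
          rintro rfl
          simp only [Function.mem_support] at hu
          exact hu (if_neg (by simp))
        exact ⟨(u.dropLast, u.getLast hne), List.dropLast_append_getLast hne⟩
      calc (∑' u : List ℕ, (if u.length = n + 1 ∧ b.alive u ω then
          F (fun k : Fin (n + 1) => b.mark (u.take (k + 1)) ω) else 0))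
          = ∑' p : List ℕ × ℕ,
            (if (p.1 ++ [p.2]).length = n + 1 ∧ b.alive (p.1 ++ [p.2]) ω then
            F (fun k : Fin (n + 1) => b.mark ((p.1 ++ [p.2]).take (k + 1)) ω) else 0) :=
          (Function.Injective.tsum_eq he_inj hsupp).symm
        _ = _ := ENNReal.tsum_prod (f := fun v i =>
            (if (v ++ [i]).length = n + 1 ∧ b.alive (v ++ [i]) ω then
            F (fun k : Fin (n + 1) => b.mark ((v ++ [i]).take (k + 1)) ω) else 0))
    have hterm : ∀ (ω : Ω) (v : List ℕ) (i : ℕ),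
        (if (v ++ [i]).length = n + 1 ∧ b.alive (v ++ [i]) ω then
          F (fun k : Fin (n + 1) => b.mark ((v ++ [i]).take (k + 1)) ω) else 0)
        = if v.length = n ∧ b.alive v ω then
            (if i < b.Noff v ω then
              F (Fin.snoc (fun k : Fin n => b.mark (v.take (k + 1)) ω)
                (b.mark (v ++ [i]) ω)) else 0) else 0 := by
      intro ω v i
      by_cases h1 : v.length = n
      · by_cases h2 : b.alive v ω
        · by_cases h3 : i < b.Noff v ω
          · rw [if_pos ⟨by simp [h1], (alive_concat b v i ω).mpr ⟨h2, h3⟩⟩,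
              if_pos ⟨h1, h2⟩, if_pos h3]
            congr 1
            funext k
            refine Fin.lastCases ?_ (fun j => ?_) k
            · rw [Fin.snoc_last]
              congr 1
              rw [List.take_of_length_le (by simp [h1])]
            · rw [Fin.snoc_castSucc]
              congr 1
              rw [show ((j.castSucc : Fin (n + 1)) : ℕ) = (j : ℕ) from rfl]
              exact List.take_append_of_le_length (by have := j.isLt; omega)
          · rw [if_neg (fun hc => h3 ((alive_concat b v i ω).mp hc.2).2),
              if_pos ⟨h1, h2⟩, if_neg h3]
        · rw [if_neg (fun hc => h2 ((alive_concat b v i ω).mp hc.2).1),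
            if_neg (fun hc => h2 hc.2)]
      · rw [if_neg, if_neg (fun hc => h1 hc.1)]
        rintro ⟨hlen, -⟩
        apply h1
        simp only [List.length_append, List.length_singleton] at hlen
        omega
    have hinner : ∀ (ω : Ω) (v : List ℕ),
        (∑' i : ℕ, if v.length = n ∧ b.alive v ω then
          (if i < b.Noff v ω then
            F (Fin.snoc (fun k : Fin n => b.mark (v.take (k + 1)) ω)
              (b.mark (v ++ [i]) ω)) else 0) else 0)
        = if v.length = n ∧ b.alive v ω then
            ∑ i ∈ Finset.range (b.Noff v ω),
              F (Fin.snoc (fun k : Fin n => b.mark (v.take (k + 1)) ω)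
                (b.mark (v ++ [i]) ω)) else 0 := by
      intro ω v
      by_cases hc : v.length = n ∧ b.alive v ω
      · simp only [if_pos hc]
        exact sum_range_eq_tsum.symm
      · simp only [if_neg hc, tsum_zero]
    have hmeasMid : ∀ v : List ℕ, Measurable fun ω =>
        (if v.length = n ∧ b.alive v ω then
          ∑ i ∈ Finset.range (b.Noff v ω),
            F (Fin.snoc (fun k : Fin n => b.mark (v.take (k + 1)) ω)
              (b.mark (v ++ [i]) ω)) else 0) := by
      intro v
      by_cases hl : v.length = n
      · have hset : MeasurableSet {ω | v.length = n ∧ b.alive v ω} := by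
          simpa [hl] using measurableSet_alive b v
        refine Measurable.ite hset (measurable_sum_range (b.measN v) (fun i => ?_))
          measurable_const
        have hpair : Measurable fun ω =>
            ((fun k : Fin n => b.mark (v.take (k + 1)) ω, b.mark (v ++ [i]) ω) :
              (Fin n → GLV d) × GLV d) :=
          (measurable_pi_lambda _ fun k => b.measMark _).prodMk (b.measMark _)
        exact (hF.comp measurable_snocFun).comp hpair
      · simp only [hl, false_and, if_false]
        exact measurable_const
    have key : ∀ v : List ℕ,
        ∫⁻ ω, (if v.length = n ∧ b.alive v ω then
          ∑ i ∈ Finset.range (b.Noff v ω),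
            F (Fin.snoc (fun k : Fin n => b.mark (v.take (k + 1)) ω)
              (b.mark (v ++ [i]) ω)) else 0) ∂b.PP
        = ENNReal.ofReal b.EN * ∫⁻ ω, (if v.length = n ∧ b.alive v ω then
            G' (fun k : Fin n => b.mark (v.take (k + 1)) ω) else 0) ∂b.PP := by
      intro v
      by_cases hl : v.length = n
      · subst hl
        have hstep := step b hlaw v (F := fun gs g => F (Fin.snoc gs g))
          (hF.comp measurable_snocFun)
        simpa [hG'def] using hstep
      · simp [hl]
    calc ∫⁻ ω, ∑' u : List ℕ, (if u.length = n + 1 ∧ b.alive u ω then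
          F (fun k : Fin (n + 1) => b.mark (u.take (k + 1)) ω) else 0) ∂b.PP
        = ∫⁻ ω, ∑' v : List ℕ, (if v.length = n ∧ b.alive v ω then
            ∑ i ∈ Finset.range (b.Noff v ω),
              F (Fin.snoc (fun k : Fin n => b.mark (v.take (k + 1)) ω)
                (b.mark (v ++ [i]) ω)) else 0) ∂b.PP := by
          refine lintegral_congr fun ω => ?_
          rw [hsum ω]
          refine tsum_congr fun v => ?_
          rw [tsum_congr fun i => hterm ω v i]
          exact hinner ω v
      _ = ∑' v : List ℕ, ∫⁻ ω, (if v.length = n ∧ b.alive v ω then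
            ∑ i ∈ Finset.range (b.Noff v ω),
              F (Fin.snoc (fun k : Fin n => b.mark (v.take (k + 1)) ω)
                (b.mark (v ++ [i]) ω)) else 0) ∂b.PP :=
          lintegral_tsum fun v => (hmeasMid v).aemeasurable
      _ = ∑' v : List ℕ, ENNReal.ofReal b.EN * ∫⁻ ω,
            (if v.length = n ∧ b.alive v ω then
              G' (fun k : Fin n => b.mark (v.take (k + 1)) ω) else 0) ∂b.PP :=
          tsum_congr key
      _ = ENNReal.ofReal b.EN * ∑' v : List ℕ, ∫⁻ ω,
            (if v.length = n ∧ b.alive v ω then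
              G' (fun k : Fin n => b.mark (v.take (k + 1)) ω) else 0) ∂b.PP :=
          ENNReal.tsum_mul_left
      _ = ENNReal.ofReal b.EN * ∫⁻ ω, ∑' v : List ℕ,
            (if v.length = n ∧ b.alive v ω then
              G' (fun k : Fin n => b.mark (v.take (k + 1)) ω) else 0) ∂b.PP := by
          rw [lintegral_tsum fun v => (measurable_term b hG' v).aemeasurable]
      _ = ENNReal.ofReal b.EN * ((ENNReal.ofReal b.EN) ^ n *
            ∫⁻ gs, G' gs ∂(Measure.pi fun _ : Fin n => μ)) := by
          rw [ih G' hG']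
      _ = (ENNReal.ofReal b.EN) ^ (n + 1) *
            ∫⁻ gs, F gs ∂(Measure.pi fun _ : Fin (n + 1) => μ) := by
          rw [lintegral_pi_snoc hF, pow_succ]
          simp only [hG'def]
          ring

end BRWpart

/-- the path functional `gs ↦ ((G_1·x, σ(G_1,x)), …, (G_n·x, σ(G_n,x)))`. -/
def pathFn (x : PV d) {n : ℕ} (gs : Fin n → GLV d) : Fin n → PV d × ℝ :=
  fun k => (gact (prodTup (fun j : Fin ((k : ℕ) + 1) => gs (Fin.castLE k.isLt j))) x,
    cocycle (prodTup (fun j : Fin ((k : ℕ) + 1) => gs (Fin.castLE k.isLt j))) x)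

lemma measurable_pathFn (x : PV d) (n : ℕ) :
    Measurable (fun gs : Fin n → GLV d => pathFn x gs) := by
  apply measurable_pi_lambda
  intro k
  have hP : Measurable fun gs : Fin n → GLV d =>
      prodTup (fun j : Fin ((k : ℕ) + 1) => gs (Fin.castLE k.isLt j)) :=
    (measurable_prodTup _).comp (measurable_pi_lambda _ fun j => measurable_pi_apply _)
  exact ((measurable_gact_right x).comp hP).prodMk ((measurable_cocycle_right x).comp hP)

lemma path_eq_L {Ω : Type} [MeasurableSpace Ω] (b : BRW d Ω) (x : PV d) {n : ℕ}
    (u : List ℕ) (hu : u.length = n) (ω : Ω) :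
    (fun k : Fin n => (gact (b.Gu (u.take (k + 1)) ω) x,
      cocycle (b.Gu (u.take (k + 1)) ω) x))
      = pathFn x (fun k : Fin n => b.mark (u.take (k + 1)) ω) := by
  funext k
  have hk : (k : ℕ) + 1 ≤ u.length := by
    have := k.isLt; omega
  rw [Gu_take b u ω hk]
  rfl

lemma path_eq_R (x : PV d) {n : ℕ} (ω : ℕ → GLV d) :
    (fun k : Fin n => (Xc x ω (k + 1), Sc x ω (k + 1)))
      = pathFn x (fun i : Fin n => ω i) := by
  funext k
  have h1 : Xc x ω ((k : ℕ) + 1)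
      = gact (prodTup fun j : Fin ((k : ℕ) + 1) => ω j) x := by
    rw [show Xc x ω ((k : ℕ) + 1) = gact (prodPath ω ((k : ℕ) + 1)) x from rfl,
      prodPath_eq]
  have h2 : Sc x ω ((k : ℕ) + 1)
      = cocycle (prodTup fun j : Fin ((k : ℕ) + 1) => ω j) x := by
    rw [Sc_eq, prodPath_eq]
  rw [h1, h2]
  rfl

lemma real_decomp (a : ℝ) : a = (ENNReal.ofReal a).toReal - (ENNReal.ofReal (-a)).toReal := by
  rcases le_or_gt 0 a with h | h
  · rw [ENNReal.toReal_ofReal h, ENNReal.ofReal_of_nonpos (by linarith),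
      ENNReal.toReal_zero, sub_zero]
  · rw [ENNReal.ofReal_of_nonpos (le_of_lt h), ENNReal.toReal_zero,
      ENNReal.toReal_ofReal (by linarith), zero_sub, neg_neg]



set_option maxHeartbeats 4000000
set_option synthInstance.maxHeartbeats 1000000

/-- the many-to-one formula, Lemma 3.1 of the paper. Under condition A2,
for every `s ∈ I_μ⁺ ∪ I_μ⁻`, `x ∈ ℙ(V)`, `n ≥ 1` and every bounded measurable
`h : (ℙ(V) × ℝ)^n → ℝ`,
`𝔼[Σ_{|u|=n} h(X^x_{u|1}, S^x_{u|1}, …, X^x_u, S^x_u)]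
  = r_s(x) 𝔪(s)^n 𝔼_{Q_s^x}[r_s(X_n)⁻¹ e^{-s S_n} h(X_1, S_1, …, X_n, S_n)]`,
where `X^x_u = G_u · x`, `S^x_u = σ(G_u, x)` and `𝔪(s) = κ(s) 𝔼N`. -/
theorem many_to_one_formula
    (d : ℕ) (hd : 0 < d) (Ω : Type) [MeasurableSpace Ω]
    (b : BRW d Ω) (μ : Measure (GLV d)) (es : EigenSystem d μ)
    (hlaw : b.IsBRWLaw μ) (hA2 : CondA2 d μ)
    (s : ℝ) (hs : s ∈ Iplus d μ ∪ Iminus d μ)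
    (cm : ChangedMeasure d μ es s)
    (x : PV d) (n : ℕ) (hn : 1 ≤ n)
    (h : (Fin n → PV d × ℝ) → ℝ)
    (hmeas : Measurable h) (hbdd : ∃ C : ℝ, ∀ z, |h z| ≤ C) :
    ∫ ω, (∑' u : List ℕ,
        if u.length = n ∧ b.alive u ω then
          h (fun k : Fin n => (gact (b.Gu (u.take (k + 1)) ω) x,
            cocycle (b.Gu (u.take (k + 1)) ω) x))
        else 0) ∂b.PP
      = es.r s x * (es.κ s * b.EN) ^ n *
          ∫ ω, (es.r s (Xc x ω n))⁻¹ * Real.exp (-s * Sc x ω n) *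
            h (fun k : Fin n => (Xc x ω (k + 1), Sc x ω (k + 1))) ∂cm.Q x := by
  classical
  haveI := b.prob
  haveI := hA2.isProb
  haveI : SFinite μ := inferInstance
  haveI := cm.prob x
  obtain ⟨C, hC⟩ := hbdd
  have hκ : 0 < es.κ s := es.κ_pos s hs
  have hrpos : ∀ y, 0 < es.r s y := es.r_pos s hs
  have hEN0 : 0 ≤ b.EN := integral_nonneg fun ω => by positivity
  set Pi_n : Measure (Fin n → GLV d) := Measure.pi fun _ : Fin n => μ with hPidef
  haveI : IsProbabilityMeasure Pi_n := by rw [hPidef]; infer_instance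
  have hmeasPath := measurable_pathFn x n
  have hH : Measurable fun gs : Fin n → GLV d => h (pathFn x gs) := hmeas.comp hmeasPath
  have hFpm : Measurable fun gs : Fin n → GLV d => ENNReal.ofReal (h (pathFn x gs)) :=
    ENNReal.measurable_ofReal.comp hH
  have hFmm : Measurable fun gs : Fin n → GLV d => ENNReal.ofReal (-h (pathFn x gs)) :=
    ENNReal.measurable_ofReal.comp hH.neg
  have hIp_le : ∫⁻ gs, ENNReal.ofReal (h (pathFn x gs)) ∂Pi_n ≤ ENNReal.ofReal C := by
    calc ∫⁻ gs, ENNReal.ofReal (h (pathFn x gs)) ∂Pi_n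
        ≤ ∫⁻ _, ENNReal.ofReal C ∂Pi_n :=
          lintegral_mono fun gs => ENNReal.ofReal_le_ofReal ((le_abs_self _).trans (hC _))
      _ = ENNReal.ofReal C := by rw [lintegral_const, measure_univ, mul_one]
  have hIm_le : ∫⁻ gs, ENNReal.ofReal (-h (pathFn x gs)) ∂Pi_n ≤ ENNReal.ofReal C := by
    calc ∫⁻ gs, ENNReal.ofReal (-h (pathFn x gs)) ∂Pi_n
        ≤ ∫⁻ _, ENNReal.ofReal C ∂Pi_n :=
          lintegral_mono fun gs => ENNReal.ofReal_le_ofReal ((neg_le_abs _).trans (hC _))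
      _ = ENNReal.ofReal C := by rw [lintegral_const, measure_univ, mul_one]
  have hIp_ne : ∫⁻ gs, ENNReal.ofReal (h (pathFn x gs)) ∂Pi_n ≠ ⊤ :=
    ne_top_of_le_ne_top ENNReal.ofReal_ne_top hIp_le
  have hIm_ne : ∫⁻ gs, ENNReal.ofReal (-h (pathFn x gs)) ∂Pi_n ≠ ⊤ :=
    ne_top_of_le_ne_top ENNReal.ofReal_ne_top hIm_le
  have hMTOp := manyToOneENN b hlaw n
    (fun gs => ENNReal.ofReal (h (pathFn x gs))) hFpm
  have hMTOm := manyToOneENN b hlaw n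
    (fun gs => ENNReal.ofReal (-h (pathFn x gs))) hFmm
  have hPpm : Measurable fun ω => ∑' u : List ℕ, (if u.length = n ∧ b.alive u ω then
      ENNReal.ofReal (h (pathFn x (fun k : Fin n => b.mark (u.take (k + 1)) ω))) else 0) :=
    Measurable.ennreal_tsum fun u => measurable_term b hFpm u
  have hPmm : Measurable fun ω => ∑' u : List ℕ, (if u.length = n ∧ b.alive u ω then
      ENNReal.ofReal (-h (pathFn x (fun k : Fin n => b.mark (u.take (k + 1)) ω))) else 0) :=
    Measurable.ennreal_tsum fun u => measurable_term b hFmm u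
  have hPp_ne : ∫⁻ ω, (∑' u : List ℕ, (if u.length = n ∧ b.alive u ω then
      ENNReal.ofReal (h (pathFn x (fun k : Fin n => b.mark (u.take (k + 1)) ω))) else 0))
      ∂b.PP ≠ ⊤ := by
    rw [hMTOp]
    exact ENNReal.mul_ne_top (ENNReal.pow_ne_top ENNReal.ofReal_ne_top) hIp_ne
  have hPm_ne : ∫⁻ ω, (∑' u : List ℕ, (if u.length = n ∧ b.alive u ω then
      ENNReal.ofReal (-h (pathFn x (fun k : Fin n => b.mark (u.take (k + 1)) ω))) else 0))
      ∂b.PP ≠ ⊤ := by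
    rw [hMTOm]
    exact ENNReal.mul_ne_top (ENNReal.pow_ne_top ENNReal.ofReal_ne_top) hIm_ne
  have hae_p := ae_lt_top hPpm hPp_ne
  have hae_m := ae_lt_top hPmm hPm_ne
  have hdecomp : ∀ᵐ ω ∂b.PP, (∑' u : List ℕ,
      if u.length = n ∧ b.alive u ω then
        h (fun k : Fin n => (gact (b.Gu (u.take (k + 1)) ω) x,
          cocycle (b.Gu (u.take (k + 1)) ω) x))
      else 0)
      = (∑' u : List ℕ, (if u.length = n ∧ b.alive u ω then
          ENNReal.ofReal (h (pathFn x (fun k : Fin n => b.mark (u.take (k + 1)) ω)))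
          else 0)).toReal
        - (∑' u : List ℕ, (if u.length = n ∧ b.alive u ω then
          ENNReal.ofReal (-h (pathFn x (fun k : Fin n => b.mark (u.take (k + 1)) ω)))
          else 0)).toReal := by
    filter_upwards [hae_p, hae_m] with ω h1 h2
    have hsp : Summable fun u : List ℕ => ((if u.length = n ∧ b.alive u ω then
        ENNReal.ofReal (h (pathFn x (fun k : Fin n => b.mark (u.take (k + 1)) ω)))
        else 0)).toReal := ENNReal.summable_toReal h1.ne
    have hsm : Summable fun u : List ℕ => ((if u.length = n ∧ b.alive u ω then
        ENNReal.ofReal (-h (pathFn x (fun k : Fin n => b.mark (u.take (k + 1)) ω)))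
        else 0)).toReal := ENNReal.summable_toReal h2.ne
    have hfinp : ∀ u : List ℕ, (if u.length = n ∧ b.alive u ω then
        ENNReal.ofReal (h (pathFn x (fun k : Fin n => b.mark (u.take (k + 1)) ω)))
        else 0) ≠ ⊤ := by
      intro u; by_cases hc : u.length = n ∧ b.alive u ω
      · rw [if_pos hc]; exact ENNReal.ofReal_ne_top
      · rw [if_neg hc]; exact ENNReal.zero_ne_top
    have hfinm : ∀ u : List ℕ, (if u.length = n ∧ b.alive u ω then
        ENNReal.ofReal (-h (pathFn x (fun k : Fin n => b.mark (u.take (k + 1)) ω)))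
        else 0) ≠ ⊤ := by
      intro u; by_cases hc : u.length = n ∧ b.alive u ω
      · rw [if_pos hc]; exact ENNReal.ofReal_ne_top
      · rw [if_neg hc]; exact ENNReal.zero_ne_top
    rw [ENNReal.tsum_toReal_eq hfinp, ENNReal.tsum_toReal_eq hfinm, ← hsp.tsum_sub hsm]
    refine tsum_congr fun u => ?_
    by_cases hc : u.length = n ∧ b.alive u ω
    · rw [if_pos hc, if_pos hc, if_pos hc]
      rw [congrArg h (path_eq_L b x u hc.1 ω)]
      exact real_decomp _
    · rw [if_neg hc, if_neg hc, if_neg hc]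
      simp
  have hLHS : ∫ ω, (∑' u : List ℕ,
      if u.length = n ∧ b.alive u ω then
        h (fun k : Fin n => (gact (b.Gu (u.take (k + 1)) ω) x,
          cocycle (b.Gu (u.take (k + 1)) ω) x))
      else 0) ∂b.PP
      = b.EN ^ n * ((∫⁻ gs, ENNReal.ofReal (h (pathFn x gs)) ∂Pi_n).toReal
        - (∫⁻ gs, ENNReal.ofReal (-h (pathFn x gs)) ∂Pi_n).toReal) := by
    rw [integral_congr_ae hdecomp]
    rw [integral_sub (integrable_toReal_of_lintegral_ne_top hPpm.aemeasurable hPp_ne)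
      (integrable_toReal_of_lintegral_ne_top hPmm.aemeasurable hPm_ne)]
    rw [integral_toReal hPpm.aemeasurable hae_p, integral_toReal hPmm.aemeasurable hae_m,
      hMTOp, hMTOm]
    rw [ENNReal.toReal_mul, ENNReal.toReal_mul, ENNReal.toReal_pow,
      ENNReal.toReal_ofReal hEN0]
    ring
  have hInt : Integrable (fun gs => h (pathFn x gs)) Pi_n := by
    refine Integrable.mono' (integrable_const C) hH.aestronglyMeasurable ?_
    exact Filter.Eventually.of_forall fun gs => by
      simpa [Real.norm_eq_abs] using hC (pathFn x gs)
  have hIdiff : ∫ gs, h (pathFn x gs) ∂Pi_n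
      = (∫⁻ gs, ENNReal.ofReal (h (pathFn x gs)) ∂Pi_n).toReal
        - (∫⁻ gs, ENNReal.ofReal (-h (pathFn x gs)) ∂Pi_n).toReal :=
    integral_eq_lintegral_pos_part_sub_lintegral_neg_part hInt
  -- the RHS
  have hmg : Measurable fun gs : Fin n → GLV d => gact (prodTup gs) x :=
    (measurable_gact_right x).comp (measurable_prodTup n)
  have hmc : Measurable fun gs : Fin n → GLV d => cocycle (prodTup gs) x :=
    (measurable_cocycle_right x).comp (measurable_prodTup n)
  have hr_meas : Measurable (es.r s) := (es.r_cont s hs).measurable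
  have hdens_meas : Measurable fun gs : Fin n → GLV d =>
      (es.κ s ^ n)⁻¹ * Real.exp (s * cocycle (prodTup gs) x) *
        (es.r s (gact (prodTup gs) x) / es.r s x) :=
    (measurable_const.mul (Real.measurable_exp.comp (hmc.const_mul s))).mul
      ((hr_meas.comp hmg).div_const _)
  have hΨ : Measurable fun gs : Fin n → GLV d =>
      (es.r s (gact (prodTup gs) x))⁻¹ * Real.exp (-s * cocycle (prodTup gs) x) *
        h (pathFn x gs) :=
    (((hr_meas.comp hmg).inv).mul (Real.measurable_exp.comp (hmc.const_mul (-s)))).mul hH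
  have hproj : Measurable fun ω : ℕ → GLV d => (fun i : Fin n => ω i) :=
    measurable_pi_lambda _ fun i => measurable_pi_apply (i : ℕ)
  have hRint : (fun ω : ℕ → GLV d => (es.r s (Xc x ω n))⁻¹ * Real.exp (-s * Sc x ω n) *
      h (fun k : Fin n => (Xc x ω (k + 1), Sc x ω (k + 1))))
      = fun ω : ℕ → GLV d =>
        (es.r s (gact (prodTup fun i : Fin n => ω i) x))⁻¹ *
          Real.exp (-s * cocycle (prodTup fun i : Fin n => ω i) x) *
          h (pathFn x (fun i : Fin n => ω i)) := by
    funext ω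
    rw [path_eq_R x ω]
    rw [show Xc x ω n = gact (prodTup fun i : Fin n => ω i) x from by
      rw [show Xc x ω n = gact (prodPath ω n) x from rfl, prodPath_eq]]
    rw [Sc_eq x ω n, prodPath_eq]
  have hRHS : ∫ ω, (es.r s (Xc x ω n))⁻¹ * Real.exp (-s * Sc x ω n) *
      h (fun k : Fin n => (Xc x ω (k + 1), Sc x ω (k + 1))) ∂cm.Q x
      = ((es.κ s ^ n)⁻¹ * (es.r s x)⁻¹) * ∫ gs, h (pathFn x gs) ∂Pi_n := by
    calc ∫ ω, (es.r s (Xc x ω n))⁻¹ * Real.exp (-s * Sc x ω n) *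
        h (fun k : Fin n => (Xc x ω (k + 1), Sc x ω (k + 1))) ∂cm.Q x
        = ∫ ω, (es.r s (gact (prodTup fun i : Fin n => ω i) x))⁻¹ *
            Real.exp (-s * cocycle (prodTup fun i : Fin n => ω i) x) *
            h (pathFn x (fun i : Fin n => ω i)) ∂cm.Q x := by rw [hRint]
      _ = ∫ gs, (es.r s (gact (prodTup gs) x))⁻¹ *
            Real.exp (-s * cocycle (prodTup gs) x) * h (pathFn x gs)
            ∂(Measure.map (fun ω (i : Fin n) => ω i) (cm.Q x)) :=
          (integral_map hproj.aemeasurable hΨ.aestronglyMeasurable).symm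
      _ = ∫ gs, (es.r s (gact (prodTup gs) x))⁻¹ *
            Real.exp (-s * cocycle (prodTup gs) x) * h (pathFn x gs)
            ∂(Pi_n.withDensity fun gs =>
              ENNReal.ofReal ((es.κ s ^ n)⁻¹ * Real.exp (s * cocycle (prodTup gs) x) *
                (es.r s (gact (prodTup gs) x) / es.r s x))) := by
          rw [cm.marg x n]
      _ = ∫ gs, ((es.κ s ^ n)⁻¹ * Real.exp (s * cocycle (prodTup gs) x) *
            (es.r s (gact (prodTup gs) x) / es.r s x)).toNNReal •
            ((es.r s (gact (prodTup gs) x))⁻¹ *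
              Real.exp (-s * cocycle (prodTup gs) x) * h (pathFn x gs)) ∂Pi_n := by
          rw [show (fun gs : Fin n → GLV d =>
              ENNReal.ofReal ((es.κ s ^ n)⁻¹ * Real.exp (s * cocycle (prodTup gs) x) *
                (es.r s (gact (prodTup gs) x) / es.r s x)))
            = (fun gs : Fin n → GLV d =>
              ((((es.κ s ^ n)⁻¹ * Real.exp (s * cocycle (prodTup gs) x) *
                (es.r s (gact (prodTup gs) x) / es.r s x)).toNNReal : ℝ≥0) : ℝ≥0∞))
            from rfl]
          exact integral_withDensity_eq_integral_smul
            (hdens_meas.real_toNNReal) _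
      _ = ∫ gs, ((es.κ s ^ n)⁻¹ * (es.r s x)⁻¹) * h (pathFn x gs) ∂Pi_n := by
          refine integral_congr_ae (Filter.Eventually.of_forall fun gs => ?_)
          have hdnn : 0 ≤ (es.κ s ^ n)⁻¹ * Real.exp (s * cocycle (prodTup gs) x) *
              (es.r s (gact (prodTup gs) x) / es.r s x) :=
            mul_nonneg (mul_nonneg (inv_nonneg.mpr (pow_nonneg hκ.le n))
              (Real.exp_pos _).le) (div_nonneg (hrpos _).le (hrpos x).le)
          simp only [NNReal.smul_def, Real.coe_toNNReal _ hdnn, smul_eq_mul]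
          have hry : es.r s (gact (prodTup gs) x) ≠ 0 := (hrpos _).ne'
          have hrx : es.r s x ≠ 0 := (hrpos x).ne'
          have hex : Real.exp (s * cocycle (prodTup gs) x) ≠ 0 := Real.exp_ne_zero _
          have hκ0 : es.κ s ≠ 0 := hκ.ne'
          rw [neg_mul, Real.exp_neg]
          field_simp
      _ = ((es.κ s ^ n)⁻¹ * (es.r s x)⁻¹) * ∫ gs, h (pathFn x gs) ∂Pi_n :=
          integral_const_mul _ _
  rw [hLHS, hRHS, ← hIdiff]
  have hκn : es.κ s ^ n ≠ 0 := pow_ne_zero n hκ.ne'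
  have hrx : es.r s x ≠ 0 := (hrpos x).ne'
  rw [mul_pow]
  field_simp


end BRWGL
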